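/- Let point pairs (x_i, y_i) ∈ ℝ² × ℝ², i = 1, …, m, be given. Suppose P₁ = (I 0) (the 3×4 matrix whose left 3×3 block is the identity and last column is zero) and P₂ = (A b) is a 3×4 real matrix of rank 3 with A ∈ ℝ^{3×3}, b ∈ ℝ³. Suppose there is a subset σ ⊆ {1,…,m} and vectors v_i ∈ ℝ³ such that: for every i ∈ σ, v_i ≠ 0 and P₁(v_i,0)ᵀ is a nonzero scalar multiple of x̂_i and P₂(v_i,0)ᵀ is a nonzero scalar multiple of ŷ_i; and for every i ∉ σ, P₁ v̂_i is a nonzero scalar multiple of x̂_i and P₂ v̂_i is a nonzero scalar multiple of ŷ_i. Then there exist a finite camera P₂' and points v_i' ∈ ℝ³ such that for all i, P₁ v̂_i' is a nonzero scalar multiple of x̂_i and P₂' v̂_i' is a nonzero scalar multiple of ŷ_i. -/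

import Mathlib

open Matrix

noncomputable section

/-- For `u ∈ ℝⁿ`, `hat u = (u, 1)ᵀ ∈ ℝⁿ⁺¹`. -/
def hat {n : ℕ} (u : Fin n → ℝ) : Fin (n + 1) → ℝ := Fin.snoc u 1

/-- The 3×4 matrix `(A b)` with left 3×3 block `A` and last column `b`. -/
def cam (A : Matrix (Fin 3) (Fin 3) ℝ) (b : Fin 3 → ℝ) : Matrix (Fin 3) (Fin 4) ℝ :=
  Matrix.of fun i => Fin.snoc (A i) (b i)

/-- The left 3×3 block of a 3×4 matrix. -/
def leftBlock (P : Matrix (Fin 3) (Fin 4) ℝ) : Matrix (Fin 3) (Fin 3) ℝ :=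
  P.submatrix id Fin.castSucc

/-- A (projective) camera is a real 3×4 matrix of rank 3. -/
def IsCamera (P : Matrix (Fin 3) (Fin 4) ℝ) : Prop := P.rank = 3

/-- A finite camera: the left 3×3 block is nonsingular. -/
def IsFiniteCamera (P : Matrix (Fin 3) (Fin 4) ℝ) : Prop := IsUnit (leftBlock P).det

/-- Two cameras are coincident if their camera centers agree up to a nonzero scale;
for rank-3 cameras the center is the (one-dimensional) kernel, so this says the two
cameras share a common nonzero kernel vector. -/
def Coincident (P Q : Matrix (Fin 3) (Fin 4) ℝ) : Prop :=
  ∃ c : Fin 4 → ℝ, c ≠ 0 ∧ P.mulVec c = 0 ∧ Q.mulVec c = 0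

/-- `u` is a nonzero scalar multiple of `v`. -/
def SimEq {n : ℕ} (u v : Fin n → ℝ) : Prop := ∃ c : ℝ, c ≠ 0 ∧ u = c • v

/-- The skew-symmetric matrix `[v]ₓ` with `[v]ₓ w = v × w`. -/
def skew (v : Fin 3 → ℝ) : Matrix (Fin 3) (Fin 3) ℝ :=
  !![0, -v 2, v 1; v 2, 0, -v 0; -v 1, v 0, 0]

/-- `(x, y)` is `(A, b)`-irregular. -/
def Irregular (A : Matrix (Fin 3) (Fin 3) ℝ) (b : Fin 3 → ℝ) (x y : Fin 2 → ℝ) : Prop :=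
  ((skew b * A).mulVec (hat x) = 0 ∧ Matrix.vecMul (hat y) (skew b) ≠ 0) ∨
  ((skew b * A).mulVec (hat x) ≠ 0 ∧ Matrix.vecMul (hat y) (skew b) = 0)

lemma cam_mulVec (A : Matrix (Fin 3) (Fin 3) ℝ) (b : Fin 3 → ℝ) (w : Fin 3 → ℝ) (s : ℝ) :
    (cam A b).mulVec (Fin.snoc w s) = A.mulVec w + s • b := by
  ext i
  simp [cam, mulVec, dotProduct, Fin.sum_univ_castSucc, Fin.snoc_castSucc, Fin.snoc_last,
    mul_comm]
  rfl

lemma leftBlock_cam (A : Matrix (Fin 3) (Fin 3) ℝ) (b : Fin 3 → ℝ) :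
    leftBlock (cam A b) = A := by
  ext i j
  simp [leftBlock, cam]

lemma vecMulVec_mulVec (b t w : Fin 3 → ℝ) :
    (vecMulVec b t).mulVec w = (t ⬝ᵥ w) • b := by
  ext i
  simp [vecMulVec, mulVec, dotProduct, Finset.mul_sum, mul_comm, mul_left_comm]

lemma det_witness (A : Matrix (Fin 3) (Fin 3) ℝ) (b : Fin 3 → ℝ)
    (h : (cam A b).rank = 3) :
    ∃ t : Fin 3 → ℝ, (A + vecMulVec b t).det ≠ 0 := by
  -- kernel of cam A b has finrank 1
  have hrank : Module.finrank ℝ (LinearMap.range (cam A b).mulVecLin) = 3 := h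
  have hsum := LinearMap.finrank_range_add_finrank_ker (cam A b).mulVecLin
  rw [hrank] at hsum
  have hker : Module.finrank ℝ (LinearMap.ker (cam A b).mulVecLin) = 1 := by
    simp [Module.finrank_fintype_fun_eq_card] at hsum
    omega
  obtain ⟨c, hc0, hcspan⟩ := finrank_eq_one_iff'.mp hker
  set u : Fin 3 → ℝ := fun j => (c : Fin 4 → ℝ) (Fin.castSucc j) with hu
  set s : ℝ := (c : Fin 4 → ℝ) (Fin.last 3) with hs
  have hcval : (c : Fin 4 → ℝ) = Fin.snoc u s := by
    funext j
    refine Fin.lastCases ?_ ?_ j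
    · simp [hu, hs]; rfl
    · intro j; simp [hu]
  have hcker : A.mulVec u + s • b = 0 := by
    have := c.2
    rw [LinearMap.mem_ker] at this
    rw [mulVecLin_apply, hcval, cam_mulVec] at this
    exact this
  -- choose t with t ⬝ᵥ u ≠ s
  have : ∃ t : Fin 3 → ℝ, t ⬝ᵥ u ≠ s := by
    by_cases hu0 : u = 0
    · refine ⟨0, ?_⟩
      have hs0 : s ≠ 0 := by
        intro h0
        apply hc0
        apply Subtype.ext
        rw [hcval, hu0, h0]
        funext j
        refine Fin.lastCases ?_ ?_ j <;> simp <;> rfl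
      simp [hs0.symm, hu0]
    · refine ⟨((s + 1) / (u ⬝ᵥ u)) • u, ?_⟩
      have huu : u ⬝ᵥ u ≠ 0 := fun h0 => hu0 (dotProduct_self_eq_zero.mp h0)
      rw [smul_dotProduct, smul_eq_mul, div_mul_cancel₀ _ huu]
      intro h; simpa using h
  obtain ⟨t, ht⟩ := this
  refine ⟨t, ?_⟩
  intro hdet
  obtain ⟨w, hw0, hw⟩ := Matrix.exists_mulVec_eq_zero_iff.mpr hdet
  rw [add_mulVec, _root_.vecMulVec_mulVec] at hw
  -- snoc w (t ⬝ᵥ w) is in the kernel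
  have hmem : Fin.snoc w (t ⬝ᵥ w) ∈ LinearMap.ker (cam A b).mulVecLin := by
    rw [LinearMap.mem_ker, mulVecLin_apply, cam_mulVec]
    exact hw
  obtain ⟨μ, hμ⟩ := hcspan ⟨_, hmem⟩
  have hμval : (μ : ℝ) • (c : Fin 4 → ℝ) = Fin.snoc w (t ⬝ᵥ w) := by
    exact congrArg Subtype.val hμ
  rw [hcval] at hμval
  have hwu : w = μ • u := by
    funext j
    have := congrFun hμval (Fin.castSucc j)
    simpa using this.symm
  have htw : t ⬝ᵥ w = μ * s := by
    have := congrFun hμval (Fin.last 3)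
    exact this.symm
  rw [hwu, dotProduct_smul, smul_eq_mul] at htw
  rcases mul_eq_mul_left_iff.mp htw with h | h
  · exact ht h
  · exact hw0 (by rw [hwu, h, zero_smul])

open MvPolynomial in
lemma generic_t (m : ℕ) (A : Matrix (Fin 3) (Fin 3) ℝ) (b : Fin 3 → ℝ)
    (h : (cam A b).rank = 3) (σ : Finset (Fin m)) (v : Fin m → Fin 3 → ℝ)
    (hv : ∀ i ∈ σ, v i ≠ 0) :
    ∃ t : Fin 3 → ℝ, (A + vecMulVec b t).det ≠ 0 ∧
      (∀ i ∈ σ, t ⬝ᵥ v i ≠ 0) ∧ (∀ i ∉ σ, (1 : ℝ) - t ⬝ᵥ v i ≠ 0) := by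
  classical
  set N : Matrix (Fin 3) (Fin 3) (MvPolynomial (Fin 3) ℝ) :=
    A.map C + Matrix.of (fun i j => C (b i) * X j) with hN
  set D : MvPolynomial (Fin 3) ℝ := N.det with hD
  have hevalD : ∀ t : Fin 3 → ℝ, eval t D = (A + vecMulVec b t).det := by
    intro t
    have : (eval t).mapMatrix N = A + vecMulVec b t := by
      ext i j
      simp [hN, vecMulVec, Matrix.map]
    rw [hD, RingHom.map_det, this]
  set q : Fin m → MvPolynomial (Fin 3) ℝ := fun i => ∑ j, C (v i j) * X j with hq
  have hevalq : ∀ i (t : Fin 3 → ℝ), eval t (q i) = t ⬝ᵥ v i := by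
    intro i t
    simp [hq, dotProduct, mul_comm]
  set F : MvPolynomial (Fin 3) ℝ :=
    D * ∏ i : Fin m, (if i ∈ σ then q i else 1 - q i) with hF
  have hD0 : D ≠ 0 := by
    obtain ⟨t, ht⟩ := det_witness A b h
    intro h0
    rw [← hevalD t] at ht
    simp [h0] at ht
  have hF0 : F ≠ 0 := by
    rw [hF]
    refine mul_ne_zero hD0 (Finset.prod_ne_zero_iff.mpr fun i _ => ?_)
    split_ifs with hi
    · intro h0
      have h1 := hevalq i (v i)
      rw [h0, map_zero] at h1
      exact hv i hi (dotProduct_self_eq_zero.mp h1.symm)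
    · intro h0
      have : eval 0 ((1 : MvPolynomial (Fin 3) ℝ) - q i) = 0 := by rw [h0]; simp
      rw [map_sub, hevalq] at this
      simp at this
  have : ∃ t : Fin 3 → ℝ, eval t F ≠ 0 := by
    by_contra hcon
    push_neg at hcon
    exact hF0 (MvPolynomial.funext (q := 0) (fun t => by simp [hcon t]))
  obtain ⟨t, htF⟩ := this
  rw [hF, _root_.map_mul, map_prod] at htF
  have h1 : eval t D ≠ 0 := fun h0 => htF (by rw [h0, zero_mul])
  have h2 : ∀ i : Fin m, eval t (if i ∈ σ then q i else 1 - q i) ≠ 0 := by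
    intro i
    have := mul_ne_zero_iff.mp htF |>.2
    exact Finset.prod_ne_zero_iff.mp this i (Finset.mem_univ i)
  refine ⟨t, by rwa [hevalD t] at h1, ?_, ?_⟩
  · intro i hi
    have := h2 i
    rw [if_pos hi, hevalq] at this
    exact this
  · intro i hi
    have := h2 i
    rw [if_neg hi, map_sub, _root_.map_one, hevalq] at this
    exact this

/-- Lemma: a projective reconstruction with first camera `(I 0)` (where some scene points
may be at infinity) can be replaced by a finite reconstruction with the same first camera. -/
theorem stmt1 (m : ℕ) (x y : Fin m → Fin 2 → ℝ)
    (A : Matrix (Fin 3) (Fin 3) ℝ) (b : Fin 3 → ℝ)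
    (hP2 : IsCamera (cam A b))
    (σ : Finset (Fin m)) (v : Fin m → Fin 3 → ℝ)
    (hσ : ∀ i ∈ σ, v i ≠ 0 ∧
      SimEq ((cam 1 0).mulVec (Fin.snoc (v i) 0)) (hat (x i)) ∧
      SimEq ((cam A b).mulVec (Fin.snoc (v i) 0)) (hat (y i)))
    (hσc : ∀ i ∉ σ,
      SimEq ((cam 1 0).mulVec (hat (v i))) (hat (x i)) ∧
      SimEq ((cam A b).mulVec (hat (v i))) (hat (y i))) :
    ∃ (P₂' : Matrix (Fin 3) (Fin 4) ℝ) (v' : Fin m → Fin 3 → ℝ),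
      IsFiniteCamera P₂' ∧ ∀ i,
        SimEq ((cam 1 0).mulVec (hat (v' i))) (hat (x i)) ∧
        SimEq (P₂'.mulVec (hat (v' i))) (hat (y i)) := by
  classical
  obtain ⟨t, hdet, htσ, htσc⟩ := generic_t m A b hP2 σ v (fun i hi => (hσ i hi).1)
  refine ⟨cam (A + vecMulVec b t) b,
    fun i => if i ∈ σ then (-(t ⬝ᵥ v i)⁻¹) • v i else (1 - t ⬝ᵥ v i)⁻¹ • v i, ?_, ?_⟩
  · rw [IsFiniteCamera, leftBlock_cam]
    exact isUnit_iff_ne_zero.mpr hdet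
  intro i
  have key : ∀ (w : Fin 3 → ℝ),
      (cam (A + vecMulVec b t) b).mulVec (hat w) = A.mulVec w + ((t ⬝ᵥ w) + 1) • b := by
    intro w
    rw [hat, cam_mulVec, add_mulVec, vecMulVec_mulVec, one_smul, add_smul, one_smul, add_assoc]
  have id_mulVec : ∀ (w : Fin 3 → ℝ) (s : ℝ), (cam 1 0).mulVec (Fin.snoc w s) = w := by
    intro w s
    rw [cam_mulVec, Matrix.one_mulVec, smul_zero, add_zero]
  have hone : ∀ l : ℝ, l ≠ 0 → -l⁻¹ * l + 1 = 0 := by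
    intro l hl; field_simp; ring
  have htwo : ∀ l : ℝ, (1:ℝ) - l ≠ 0 → (1 - l)⁻¹ * l + 1 = (1 - l)⁻¹ := by
    intro l hl; field_simp; ring
  by_cases hi : i ∈ σ
  · obtain ⟨hv0, ⟨c₁, hc₁, hx⟩, ⟨c₂, hc₂, hy⟩⟩ := hσ i hi
    rw [id_mulVec] at hx
    rw [cam_mulVec, zero_smul, add_zero] at hy
    have hlam : t ⬝ᵥ v i ≠ 0 := htσ i hi
    have hk0 : -(t ⬝ᵥ v i)⁻¹ ≠ 0 := neg_ne_zero.mpr (inv_ne_zero hlam)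
    simp only [if_pos hi]
    refine ⟨⟨-(t ⬝ᵥ v i)⁻¹ * c₁, mul_ne_zero hk0 hc₁, ?_⟩,
      ⟨-(t ⬝ᵥ v i)⁻¹ * c₂, mul_ne_zero hk0 hc₂, ?_⟩⟩
    · rw [hat, id_mulVec, mul_smul, ← hx]
    · rw [key, Matrix.mulVec_smul, hy, dotProduct_smul, smul_eq_mul, smul_smul,
        hone (t ⬝ᵥ v i) hlam, zero_smul, add_zero]
  · obtain ⟨⟨c₁, hc₁, hx⟩, ⟨c₂, hc₂, hy⟩⟩ := hσc i hi
    rw [hat, id_mulVec] at hx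
    rw [hat, cam_mulVec, one_smul] at hy
    have hmu : (1 : ℝ) - t ⬝ᵥ v i ≠ 0 := htσc i hi
    have hk0 : ((1:ℝ) - t ⬝ᵥ v i)⁻¹ ≠ 0 := inv_ne_zero hmu
    simp only [if_neg hi]
    refine ⟨⟨(1 - t ⬝ᵥ v i)⁻¹ * c₁, mul_ne_zero hk0 hc₁, ?_⟩,
      ⟨(1 - t ⬝ᵥ v i)⁻¹ * c₂, mul_ne_zero hk0 hc₂, ?_⟩⟩
    · rw [hat, id_mulVec, mul_smul, ← hx]
    · rw [key, Matrix.mulVec_smul, dotProduct_smul, smul_eq_mul,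
        htwo (t ⬝ᵥ v i) hmu, ← smul_add, hy, smul_smul]
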